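/- Let X = C_1 ∪ ... ∪ C_N be a curve of type I_N (N ≥ 2, a cycle of rational smooth curves) with polarization H of degree h, d − 1 = ht + b, k_{C_i} = h_{C_i}(b+1)/h. Suppose exactly the indices i_1,...,i_r (r ≥ 2) have k_{C_{i_j}} ∉ ℤ, write k_{C_{i_j}} = [k_{C_{i_j}}] + a_{i_j} with 0 < a_{i_j} < 1, and let ε_{i_j} ∈ {0,1}. Then there exists a stable line bundle of degree d on X with component degrees d_{C_s} = h_{C_s}t + k_{C_s} for s ∉ {i_1,...,i_r} and d_{C_{i_j}} = h_{C_{i_j}}t + [k_{C_{i_j}}] + ε_{i_j}, if and only if for every subset J ⊆ {i_1,...,i_r} such that ∪_{j∈J} C_j together with possibly some components C_s, s ∉ {i_1,...,i_r}, forms a connected proper subcurve, the inequalities Σ_{j∈J} ε_{i_j} − 1 < Σ_{j∈J} a_{i_j} < Σ_{j∈J} ε_{i_j} + 1 hold. -/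

import Mathlib

/-- An *arc* of the cycle curve `I_N`: a nonempty proper set of cyclically consecutive
components, i.e. a proper connected subcurve. -/
def IsArc (N : ℕ) [NeZero N] (D : Finset (Fin N)) : Prop :=
  D.Nonempty ∧ D ≠ Finset.univ ∧
    ∃ (a : Fin N) (l : ℕ), D = Finset.image (fun j : Fin l => a + Fin.ofNat N j.val) Finset.univ

/-- Type `I_N` fiber (`N ≥ 2`, a cycle of smooth rational curves), polarization of component
degrees `hC i` with total degree `h`, `d − 1 = ht + b`, `k_i = h_i(b+1)/h`; `S` is the set of
indices with `k_i ∉ ℤ` (assumed of cardinality `r ≥ 2`), `a_i = fract(k_i)`, `ε_i ∈ {0,1}`.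
Consider the line bundle degrees `d_s = h_s t + k_s` for `s ∉ S` and
`d_i = h_i t + ⌊k_i⌋ + ε_i` for `i ∈ S` (via the Picard group description, a stable line
bundle with these degrees exists iff the degree vector satisfies the stability criterion
`h_D t + k_D − 1 < d_D < h_D t + k_D + 1` for every proper connected subcurve, i.e. arc, `D`).
This holds iff for every `J ⊆ S` such that `∪_{j∈J} C_j` together with possibly some
components not in `S` forms a proper connected subcurve (an arc `D` with `D ∩ S = J`), one has
`Σ_{j∈J} ε_j − 1 < Σ_{j∈J} a_j < Σ_{j∈J} ε_j + 1`. -/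
theorem cycle_stable_line_bundle_criterion (N : ℕ) (hN : 2 ≤ N) [NeZero N]
    (hC : Fin N → ℤ) (hCpos : ∀ i, 0 < hC i)
    (h : ℤ) (hh : h = ∑ i, hC i)
    (t b : ℤ) (hb0 : 0 ≤ b) (hbh : b < h)
    (k : Fin N → ℚ) (hk : ∀ i, k i = (hC i : ℚ) * (b + 1) / (h : ℚ))
    (S : Finset (Fin N)) (hS : ∀ i, i ∈ S ↔ ¬ ∃ z : ℤ, k i = (z : ℚ))
    (hScard : 2 ≤ S.card)
    (ε : Fin N → ℤ) (hε : ∀ i ∈ S, ε i = 0 ∨ ε i = 1)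
    (dC : Fin N → ℚ)
    (hdC : ∀ i, dC i = if i ∈ S then (hC i : ℚ) * t + (⌊k i⌋ : ℚ) + (ε i : ℚ)
      else (hC i : ℚ) * t + k i) :
    (∀ D : Finset (Fin N), IsArc N D →
      ((∑ i ∈ D, (hC i : ℚ)) * t + (∑ i ∈ D, k i) - 1 < ∑ i ∈ D, dC i ∧
        ∑ i ∈ D, dC i < (∑ i ∈ D, (hC i : ℚ)) * t + (∑ i ∈ D, k i) + 1)) ↔
    (∀ J ⊆ S, (∃ D : Finset (Fin N), IsArc N D ∧ D ∩ S = J) →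
      ((∑ j ∈ J, (ε j : ℚ)) - 1 < ∑ j ∈ J, Int.fract (k j) ∧
        ∑ j ∈ J, Int.fract (k j) < (∑ j ∈ J, (ε j : ℚ)) + 1)) := by
  have key : ∀ D : Finset (Fin N),
      ∑ i ∈ D, dC i - ((∑ i ∈ D, (hC i : ℚ)) * t + ∑ i ∈ D, k i)
        = (∑ j ∈ D ∩ S, (ε j : ℚ)) - ∑ j ∈ D ∩ S, Int.fract (k j) := by
    intro D
    rw [← Finset.sum_sub_distrib, Finset.sum_mul, ← Finset.sum_add_distrib,
      ← Finset.sum_sub_distrib]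
    have : ∀ i ∈ D, dC i - ((hC i : ℚ) * t + k i)
        = if i ∈ S then (ε i : ℚ) - Int.fract (k i) else 0 := by
      intro i _
      rw [hdC i]
      by_cases hi : i ∈ S
      · simp only [hi, if_true, Int.fract]
        ring
      · simp [hi]
    rw [Finset.sum_congr rfl this, Finset.sum_ite_mem]
  constructor
  · intro H J hJ ⟨D, hD, hDS⟩
    have h1 := H D hD
    have h2 := key D
    rw [hDS] at h2
    constructor <;> linarith [h1.1, h1.2]
  · intro H D hD
    have h1 := H (D ∩ S) Finset.inter_subset_right ⟨D, hD, rfl⟩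
    have h2 := key D
    constructor <;> linarith [h1.1, h1.2]
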